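/- For every k ≥ 1 there exists a digraph F_k with minimum out-degree exactly k and directed tree-width equal to 1. Concretely, F_k is obtained from the complete k-ary out-arborescence T_k of depth k by adding, for every leaf u and every ancestor v of u in T_k (including the root), the arc (u, v); then every vertex of F_k has out-degree at least k, and F_k admits a directed tree-decomposition of width 1. -/

import Mathlib

/-- Reachability in `D − Z` by a directed walk avoiding `Z`. -/
def ReachAvoid {V : Type*} (A : V → V → Prop) (Z : Set V) (x y : V) : Prop :=
  Relation.ReflTransGen (fun a b => A a b ∧ a ∉ Z ∧ b ∉ Z) x y

/-- `S ⊆ V \ Z` is `Z`-normal: every directed walk in `D − Z` starting and ending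
in `S` stays in `S`. -/
def IsZNormal {V : Type*} (A : V → V → Prop) (Z S : Set V) : Prop :=
  Disjoint S Z ∧ ∀ x y z : V, x ∈ S → y ∈ S → z ∉ S →
    ¬(ReachAvoid A Z x z ∧ ReachAvoid A Z z y)

/-- A directed tree-decomposition `(T, β, γ)` of the digraph with arc relation `A`:
`T` is an out-arborescence (every node reachable from the root, every non-root node
has a unique parent, the root has none), the bags `β t` partition the vertex set into
nonempty sets, and for every tree-arc `(s,t)` the union of the bags at or below `t`
is `γ s t`-normal. -/
structure DirTreeDecomp (V : Type) (A : V → V → Prop) where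
  τ : Type
  arc : τ → τ → Prop
  root : τ
  reach_root : ∀ t, Relation.ReflTransGen arc root t
  parent_unique : ∀ t, t ≠ root → ∃! s, arc s t
  root_no_parent : ∀ s, ¬ arc s root
  β : τ → Set V
  γ : τ → τ → Set V
  β_nonempty : ∀ t, (β t).Nonempty
  β_disjoint : ∀ s t, s ≠ t → Disjoint (β s) (β t)
  β_cover : ∀ v, ∃ t, v ∈ β t
  guard : ∀ s t, arc s t →
    IsZNormal A (γ s t) (⋃ t' ∈ {t' | Relation.ReflTransGen arc t t'}, β t')

/-- `Γ(t) = β(t) ∪ ⋃ {γ(e) : e incident with t}`. -/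
def DirTreeDecomp.Gamma {V : Type} {A : V → V → Prop} (d : DirTreeDecomp V A)
    (t : d.τ) : Set V :=
  d.β t ∪ (⋃ s ∈ {s | d.arc s t}, d.γ s t) ∪ (⋃ s ∈ {s | d.arc t s}, d.γ t s)


section Fk
variable (k : ℕ)

/-- Vertices of `F_k`: lists over `Fin k` of length at most `k`. -/
abbrev Vk := {l : List (Fin k) // l.length ≤ k}

/-- Tree arcs of `T_k`: from `l` to `a :: l`. -/
def TkArc (s t : Vk k) : Prop := ∃ a : Fin k, t.1 = a :: s.1

/-- Arcs of `F_k`: tree arcs plus back arcs from leaves to proper ancestors. -/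
def AkArc (v w : Vk k) : Prop :=
  TkArc k v w ∨ (v.1.length = k ∧ w.1 ≠ v.1 ∧ w.1 <:+ v.1)

noncomputable instance : Fintype (Vk k) := (List.finite_length_le (Fin k) k).fintype

variable {k}

lemma reach_iff_suffix (t t' : Vk k) :
    Relation.ReflTransGen (TkArc k) t t' ↔ t.1 <:+ t'.1 := by
  constructor
  · intro h
    induction h with
    | refl => exact List.suffix_refl _
    | tail _ hbc ih =>
        obtain ⟨a, ha⟩ := hbc
        rw [ha]
        exact ih.trans (List.suffix_cons a _)
  · rintro ⟨ext, hext⟩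
    have key : ∀ (ext : List (Fin k)) (h : (ext ++ t.1).length ≤ k),
        Relation.ReflTransGen (TkArc k) t ⟨ext ++ t.1, h⟩ := by
      intro ext
      induction ext with
      | nil => intro h; simpa using Relation.ReflTransGen.refl
      | cons a ext' ih =>
          intro h
          have h' : (ext' ++ t.1).length ≤ k := by
            simp only [List.length_append, List.length_cons] at h ⊢; omega
          exact (ih h').tail ⟨a, by simp⟩
    have := key ext (by rw [hext]; exact t'.2)
    convert this using 2
    exact hext.symm
end Fk

section Fk2
variable {k : ℕ}

/-- No arc enters the subtree below `t` except from its parent `s`. -/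
lemma crossing {s t u w : Vk k} (hst : TkArc k s t)
    (hA : AkArc k u w) (hw : t.1 <:+ w.1) (hu : u ≠ s) : t.1 <:+ u.1 := by
  obtain ⟨a, ha⟩ := hst
  rcases hA with ⟨b, hb⟩ | ⟨_, _, hsuf⟩
  · rw [hb] at hw
    rcases List.suffix_cons_iff.mp hw with heq | hsuf
    · have h2 := ha.symm.trans heq
      simp only [List.cons.injEq] at h2
      exact absurd (Subtype.ext h2.2.symm) hu
    · exact hsuf
  · exact hw.trans hsuf

lemma no_return {s t z : Vk k} (hst : TkArc k s t) (hz : ¬ t.1 <:+ z.1) :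
    ∀ {y : Vk k}, ReachAvoid (AkArc k) {s} z y → t.1 <:+ y.1 → False := by
  intro y hr
  induction hr with
  | refl => exact fun h => hz h
  | @tail b c _ hbc ih =>
      intro hc
      obtain ⟨hA, hbZ, _⟩ := hbc
      by_cases hb : t.1 <:+ b.1
      · exact ih hb
      · exact hb (crossing hst hA hc (by simpa using hbZ))

end Fk2


section Fk3
variable {k : ℕ}

lemma outdeg_internal (v : Vk k) (hv : v.1.length < k) :
    {w | AkArc k v w}.ncard = k := by
  have hset : {w | AkArc k v w} =
      Set.range (fun a : Fin k => (⟨a :: v.1, by simpa using hv⟩ : Vk k)) := by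
    ext w
    constructor
    · rintro (⟨a, ha⟩ | ⟨hl, _⟩)
      · exact ⟨a, (Subtype.ext ha).symm⟩
      · omega
    · rintro ⟨a, rfl⟩
      exact Or.inl ⟨a, rfl⟩
  have hinj : Function.Injective (fun a : Fin k => (⟨a :: v.1, by simpa using hv⟩ : Vk k)) := by
    intro a b hab
    simpa using congrArg (fun w : Vk k => w.1.head?) hab
  rw [hset, ← Set.image_univ, Set.ncard_image_of_injective _ hinj, Set.ncard_univ,
    Nat.card_eq_fintype_card, Fintype.card_fin]

lemma outdeg_leaf (v : Vk k) (hv : v.1.length = k) :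
    {w | AkArc k v w}.ncard = k := by
  set g : Fin k → Vk k := fun i =>
    ⟨v.1.drop (i + 1), by rw [List.length_drop]; have := v.2; omega⟩ with hg
  have hset : {w | AkArc k v w} = Set.range g := by
    ext w
    constructor
    · rintro (⟨a, ha⟩ | ⟨_, hne, pre, hpre⟩)
      · exfalso
        have := w.2
        rw [ha] at this
        simp only [List.length_cons] at this
        omega
      · have hlen : w.1.length < k := by
          have h1 : pre.length + w.1.length = k := by
            have := congrArg List.length hpre
            simp only [List.length_append] at this
            omega
          rcases Nat.eq_zero_or_pos pre.length with h0 | h0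
          · exfalso
            rw [List.length_eq_zero_iff.mp h0] at hpre
            exact hne (by simpa using hpre)
          · omega
        refine ⟨⟨k - w.1.length - 1, by omega⟩, Subtype.ext ?_⟩
        have hp : pre.length = k - w.1.length := by
          have := congrArg List.length hpre
          simp only [List.length_append] at this
          omega
        simp only [hg]
        have : k - w.1.length - 1 + 1 = k - w.1.length := by omega
        rw [this, ← hp, ← hpre, List.drop_left]
    · rintro ⟨i, rfl⟩
      refine Or.inr ⟨hv, ?_, List.drop_suffix _ _⟩
      intro h
      have := congrArg List.length h
      simp only [hg, List.length_drop, hv] at this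
      omega
  have hinj : Function.Injective g := by
    intro i j hij
    have := congrArg (fun w : Vk k => w.1.length) hij
    simp only [hg, List.length_drop, hv] at this
    have hi := i.2
    have hj := j.2
    exact Fin.ext (by omega)
  rw [hset, ← Set.image_univ, Set.ncard_image_of_injective _ hinj, Set.ncard_univ,
    Nat.card_eq_fintype_card, Fintype.card_fin]

/-- The width-1 directed tree-decomposition of `F_k`. -/
noncomputable def Fdec (k : ℕ) : DirTreeDecomp (Vk k) (AkArc k) where
  τ := Vk k
  arc := TkArc k
  root := ⟨[], by simp⟩
  reach_root t := (reach_iff_suffix _ _).mpr List.nil_suffix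
  parent_unique t ht := by
    have hne : t.1 ≠ [] := fun h => ht (Subtype.ext h)
    obtain ⟨a, l, hco⟩ := List.exists_cons_of_ne_nil hne
    have hl : l.length ≤ k := by
      have := t.2; rw [hco] at this; simp only [List.length_cons] at this; omega
    refine ⟨⟨l, hl⟩, ⟨a, hco⟩, ?_⟩
    rintro s ⟨b, hb⟩
    apply Subtype.ext
    have := hb.symm.trans hco
    simp only [List.cons.injEq] at this
    exact this.2
  root_no_parent s := by rintro ⟨a, ha⟩; simp at ha
  β t := {t}
  γ s _ := {s}
  β_nonempty t := ⟨t, rfl⟩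
  β_disjoint s t h := Set.disjoint_singleton.mpr h
  β_cover v := ⟨v, rfl⟩
  guard s t hst := by
    have hS : ∀ v : Vk k,
        (v ∈ ⋃ t' ∈ {t' | Relation.ReflTransGen (TkArc k) t t'}, ({t'} : Set (Vk k)))
        ↔ t.1 <:+ v.1 := by
      intro v
      simp only [Set.mem_iUnion, Set.mem_singleton_iff, Set.mem_setOf_eq]
      constructor
      · rintro ⟨t', ht', rfl⟩; exact (reach_iff_suffix _ _).mp ht'
      · intro h; exact ⟨v, (reach_iff_suffix _ _).mpr h, rfl⟩
    constructor
    · rw [Set.disjoint_right]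
      rintro x hx hxS
      rw [Set.mem_singleton_iff] at hx
      subst hx
      obtain ⟨a, ha⟩ := hst
      have := List.IsSuffix.length_le ((hS x).mp hxS)
      rw [ha] at this
      simp at this
    · rintro x y z hx hy hz ⟨_, h2⟩
      exact no_return hst (fun h => hz ((hS z).mpr h)) h2 ((hS y).mp hy)

lemma Fdec_Gamma_subset (t : Vk k) :
    (Fdec k).Gamma t ⊆ {t, ⟨t.1.tail, le_trans (List.length_tail ▸ Nat.sub_le _ _) t.2⟩} := by
  intro v hv
  simp only [DirTreeDecomp.Gamma, Fdec, Set.mem_union, Set.mem_iUnion,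
    Set.mem_singleton_iff, Set.mem_setOf_eq] at hv
  rcases hv with (rfl | ⟨p, ⟨a, ha⟩, rfl⟩) | ⟨_, _, rfl⟩
  · exact Set.mem_insert _ _
  · right
    apply Subtype.ext
    simp only
    rw [ha, List.tail_cons]
  · exact Set.mem_insert _ _

end Fk3

/-- For every `k ≥ 1` there exists a (finite, loopless) digraph `F_k`
with minimum out-degree exactly `k` admitting a directed tree-decomposition of width
exactly `1` (i.e. `max |Γ(t)| − 1 = 1`). -/
theorem stmt14 (k : ℕ) (hk : 1 ≤ k) :
    ∃ (V : Type) (_ : Fintype V) (A : V → V → Prop),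
      (∀ v, ¬ A v v) ∧
      (∀ v : V, k ≤ {w | A v w}.ncard) ∧ (∃ v : V, {w | A v w}.ncard = k) ∧
      ∃ d : DirTreeDecomp V A,
        (∀ t, (d.Gamma t).ncard ≤ 2) ∧ (∃ t, (d.Gamma t).ncard = 2) := by
  classical
  refine ⟨Vk k, inferInstance, AkArc k, ?_, ?_, ?_, ?_⟩
  · -- loopless
    rintro v (⟨a, ha⟩ | ⟨_, hne, _⟩)
    · have := congrArg List.length ha
      simp at this
    · exact hne rfl
  · -- min out-degree ≥ k
    intro v
    rcases lt_or_eq_of_le v.2 with h | h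
    · exact le_of_eq (outdeg_internal v h).symm
    · exact le_of_eq (outdeg_leaf v h).symm
  · -- some vertex has out-degree exactly k
    exact ⟨⟨[], by simp⟩, outdeg_internal _ (by simpa using Nat.lt_of_lt_of_le Nat.zero_lt_one hk)⟩
  · -- the decomposition
    refine ⟨Fdec k, ?_, ?_⟩
    · intro t
      calc ((Fdec k).Gamma t).ncard
          ≤ ({t, ⟨t.1.tail, le_trans (List.length_tail ▸ Nat.sub_le _ _) t.2⟩} :
              Set (Vk k)).ncard :=
            Set.ncard_le_ncard (Fdec_Gamma_subset t) ((Set.finite_singleton _).insert _)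
        _ ≤ ({⟨t.1.tail, le_trans (List.length_tail ▸ Nat.sub_le _ _) t.2⟩} :
              Set (Vk k)).ncard + 1 := Set.ncard_insert_le _ _
        _ ≤ 2 := by rw [Set.ncard_singleton]
    · -- a node with |Γ| = 2
      have h1k : ([⟨0, hk⟩] : List (Fin k)).length ≤ k := by simpa using hk
      refine ⟨⟨[⟨0, hk⟩], h1k⟩, ?_⟩
      have hroot : (⟨[], by simp⟩ : Vk k) ≠ ⟨[⟨0, hk⟩], h1k⟩ := by
        intro h
        have := congrArg (fun w : Vk k => w.1.length) h
        simp at this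
      have hGamma : (Fdec k).Gamma ⟨[⟨0, hk⟩], h1k⟩ =
          {(⟨[⟨0, hk⟩], h1k⟩ : Vk k), ⟨[], by simp⟩} := by
        apply Set.Subset.antisymm
        · have hsub := Fdec_Gamma_subset (k := k) ⟨[⟨0, hk⟩], h1k⟩
          intro v hv
          rcases hsub hv with h | h
          · exact Or.inl h
          · rw [Set.mem_singleton_iff] at h
            subst h
            exact Or.inr (Set.mem_singleton_iff.mpr (Subtype.ext rfl))
        · rintro v (rfl | rfl)
          · exact Or.inl (Or.inl rfl)
          · apply Or.inl
            right
            simp only [Fdec, Set.mem_iUnion, Set.mem_singleton_iff, Set.mem_setOf_eq]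
            exact ⟨⟨[], by simp⟩, ⟨⟨0, hk⟩, rfl⟩, rfl⟩
      rw [hGamma, Set.ncard_pair hroot.symm]
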